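/- arXiv:2209.08301 — 2 statements merged into one kernel-verified Lean document; each statement's English description precedes it below -/
import Mathlib

section
/- Let D be a symmetric positive-definite p×p matrix, B ∈ ℝ^{p×m}, Σ a symmetric positive-definite m×m matrix. Then the squared spectral (operator 2-) norm satisfies ‖D^{-1/2} (B Σ⁻¹ Bᵀ + D⁻¹)⁻¹ B Σ⁻¹‖₂² ≤ ‖Σ⁻¹‖₂ / 4. -/
open Matrix

/-- The spectral norm (operator 2-norm) of a real matrix. -/
noncomputable def spec {n m : ℕ} (A : Matrix (Fin n) (Fin m) ℝ) : ℝ :=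
  ‖LinearMap.toContinuousLinearMap (Matrix.toEuclideanLin A)‖

open scoped Matrix.Norms.L2Operator

lemma spec_eq_l2 {n m : ℕ} (A : Matrix (Fin n) (Fin m) ℝ) : spec A = ‖A‖ := rfl

lemma spec_nonneg {n m : ℕ} (A : Matrix (Fin n) (Fin m) ℝ) : 0 ≤ spec A :=
  norm_nonneg _

lemma real_conjTranspose {n m : ℕ} (A : Matrix (Fin n) (Fin m) ℝ) : Aᴴ = Aᵀ := by
  ext i j; simp [conjTranspose_apply]

lemma toEuclideanLin_mul {n m l : ℕ} (A : Matrix (Fin n) (Fin m) ℝ)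
    (B : Matrix (Fin m) (Fin l) ℝ) (x : EuclideanSpace ℝ (Fin l)) :
    toEuclideanLin (A * B) x = toEuclideanLin A (toEuclideanLin B x) := by
  simp [toEuclideanLin_apply, ← Matrix.mulVec_mulVec]

set_option maxHeartbeats 2000000 in
lemma core {p m : ℕ} (N : Matrix (Fin p) (Fin m) ℝ) :
    spec ((N * Nᵀ + 1)⁻¹ * N) ≤ 1 / 2 := by
  have hpsd : (N * Nᵀ).PosSemidef := by
    simpa [real_conjTranspose] using posSemidef_self_mul_conjTranspose N
  have hP : (N * Nᵀ + 1).PosDef := Matrix.PosDef.posSemidef_add hpsd Matrix.PosDef.one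
  have hdet : IsUnit (N * Nᵀ + 1).det := (Matrix.isUnit_iff_isUnit_det _).1 hP.isUnit
  have key : (N * Nᵀ + 1) * ((N * Nᵀ + 1)⁻¹ * N) = N := by
    rw [← Matrix.mul_assoc, Matrix.mul_nonsing_inv _ hdet, Matrix.one_mul]
  unfold spec
  apply ContinuousLinearMap.opNorm_le_bound _ (by norm_num)
  intro x
  set z : EuclideanSpace ℝ (Fin p) := toEuclideanLin ((N * Nᵀ + 1)⁻¹ * N) x with hz
  have hgoal : ‖(LinearMap.toContinuousLinearMap
      (toEuclideanLin ((N * Nᵀ + 1)⁻¹ * N))) x‖ = ‖z‖ := rfl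
  rw [hgoal]
  have h1 : toEuclideanLin (N * Nᵀ + 1) z = toEuclideanLin N x := by
    rw [hz, ← toEuclideanLin_mul, key]
  set u : EuclideanSpace ℝ (Fin m) := toEuclideanLin Nᵀ z with hu
  have hadj : ∀ (v : EuclideanSpace ℝ (Fin m)) (w : EuclideanSpace ℝ (Fin p)),
      inner ℝ (toEuclideanLin N v) w = (inner ℝ v (toEuclideanLin Nᵀ w) : ℝ) := by
    intro v w
    rw [← real_conjTranspose, Matrix.toEuclideanLin_conjTranspose_eq_adjoint,
      LinearMap.adjoint_inner_right]
  have hsplit : toEuclideanLin (N * Nᵀ + 1) z = toEuclideanLin N u + z := by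
    have h1' : toEuclideanLin (N * Nᵀ + 1) z
        = toEuclideanLin (N * Nᵀ) z + toEuclideanLin (1 : Matrix (Fin p) (Fin p) ℝ) z := by
      rw [map_add]; rfl
    rw [h1', toEuclideanLin_mul, ← hu]
    congr 1
    simp [toEuclideanLin_apply]
  have e1 : inner ℝ (toEuclideanLin N x) z = (inner ℝ x u : ℝ) := hadj x z
  have e2 : (inner ℝ (toEuclideanLin N x) z : ℝ) = ‖u‖ ^ 2 + ‖z‖ ^ 2 := by
    rw [← h1, hsplit, inner_add_left, hadj, ← hu, real_inner_self_eq_norm_sq,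
      real_inner_self_eq_norm_sq]
  have e3 : (inner ℝ x u : ℝ) ≤ ‖x‖ * ‖u‖ := real_inner_le_norm x u
  have hineq : ‖u‖ ^ 2 + ‖z‖ ^ 2 ≤ ‖x‖ * ‖u‖ := by
    rw [← e2, e1]; exact e3
  have hz2 : ‖z‖ ^ 2 ≤ (‖x‖ / 2) ^ 2 := by nlinarith [sq_nonneg (‖u‖ - ‖x‖ / 2)]
  nlinarith [hz2, norm_nonneg z, norm_nonneg x]

lemma sqrt_aux {p : ℕ} (D : Matrix (Fin p) (Fin p) ℝ) (hD : D.IsHermitian)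
    (hnn : ∀ i, 0 ≤ hD.eigenvalues i) :
    ((hD.eigenvectorUnitary : Matrix (Fin p) (Fin p) ℝ) * diagonal ((↑) ∘ Real.sqrt ∘ hD.eigenvalues) * (star hD.eigenvectorUnitary : Matrix (Fin p) (Fin p) ℝ)) * ((hD.eigenvectorUnitary : Matrix (Fin p) (Fin p) ℝ) * diagonal ((↑) ∘ Real.sqrt ∘ hD.eigenvalues) * (star hD.eigenvectorUnitary : Matrix (Fin p) (Fin p) ℝ)) = D ∧
    ((hD.eigenvectorUnitary : Matrix (Fin p) (Fin p) ℝ) * diagonal ((↑) ∘ Real.sqrt ∘ hD.eigenvalues) * (star hD.eigenvectorUnitary : Matrix (Fin p) (Fin p) ℝ))ᵀ = ((hD.eigenvectorUnitary : Matrix (Fin p) (Fin p) ℝ) * diagonal ((↑) ∘ Real.sqrt ∘ hD.eigenvalues) * (star hD.eigenvectorUnitary : Matrix (Fin p) (Fin p) ℝ)) := by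
  constructor
  · have hU : (star hD.eigenvectorUnitary : Matrix (Fin p) (Fin p) ℝ) * (hD.eigenvectorUnitary : Matrix (Fin p) (Fin p) ℝ) = 1 := Unitary.coe_star_mul_self _
    have hdd : diagonal (((↑) ∘ Real.sqrt ∘ hD.eigenvalues : Fin p → ℝ)) * diagonal (((↑) ∘ Real.sqrt ∘ hD.eigenvalues : Fin p → ℝ)) = diagonal (RCLike.ofReal ∘ hD.eigenvalues) := by
      rw [diagonal_mul_diagonal]
      congr 1
      funext i
      simp [Real.mul_self_sqrt (hnn i)]
    conv_rhs => rw [hD.spectral_theorem, Unitary.conjStarAlgAut_apply]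
    calc _ = (hD.eigenvectorUnitary : Matrix (Fin p) (Fin p) ℝ) * diagonal ((↑) ∘ Real.sqrt ∘ hD.eigenvalues) * ((star hD.eigenvectorUnitary : Matrix (Fin p) (Fin p) ℝ) * (hD.eigenvectorUnitary : Matrix (Fin p) (Fin p) ℝ)) * diagonal ((↑) ∘ Real.sqrt ∘ hD.eigenvalues) * (star hD.eigenvectorUnitary : Matrix (Fin p) (Fin p) ℝ) := by
          simp only [Matrix.mul_assoc]
      _ = _ := by
          rw [hU, Matrix.mul_one, Matrix.mul_assoc _ (diagonal _) (diagonal _), hdd]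
  · simp [Matrix.star_eq_conjTranspose, real_conjTranspose, Matrix.transpose_mul, Matrix.mul_assoc]

set_option maxHeartbeats 2000000 in
theorem stmt_4 {p m : ℕ} (D : Matrix (Fin p) (Fin p) ℝ) (hD : D.PosDef)
    (B : Matrix (Fin p) (Fin m) ℝ) (S : Matrix (Fin m) (Fin m) ℝ) (hS : S.PosDef) :
    spec (((hD.isHermitian.eigenvectorUnitary : Matrix (Fin p) (Fin p) ℝ) * diagonal ((↑) ∘ Real.sqrt ∘ hD.isHermitian.eigenvalues) * (star hD.isHermitian.eigenvectorUnitary : Matrix (Fin p) (Fin p) ℝ))⁻¹ * (B * S⁻¹ * Bᵀ + D⁻¹)⁻¹ * B * S⁻¹) ^ 2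
      ≤ spec S⁻¹ / 4 := by
  classical
  set R := ((hD.isHermitian.eigenvectorUnitary : Matrix (Fin p) (Fin p) ℝ) * diagonal ((↑) ∘ Real.sqrt ∘ hD.isHermitian.eigenvalues) * (star hD.isHermitian.eigenvectorUnitary : Matrix (Fin p) (Fin p) ℝ)) with hR
  have hRR : R * R = D := (sqrt_aux D hD.isHermitian (fun i => (hD.eigenvalues_pos i).le)).1
  have hRsymm : Rᵀ = R := (sqrt_aux D hD.isHermitian (fun i => (hD.eigenvalues_pos i).le)).2
  clear_value R
  have hRdet : IsUnit R.det := by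
    have h2 : R.det * R.det = D.det := by rw [← det_mul, hRR]
    have hD' := hD.det_pos
    refine isUnit_iff_ne_zero.2 fun h => ?_
    rw [h, mul_zero] at h2
    exact hD'.ne' h2.symm
  have hRinv : R⁻¹ * R = 1 := Matrix.nonsing_inv_mul _ hRdet
  have hRinv' : R * R⁻¹ = 1 := Matrix.mul_nonsing_inv _ hRdet
  set T := ((hS.inv.isHermitian.eigenvectorUnitary : Matrix (Fin m) (Fin m) ℝ) * diagonal ((↑) ∘ Real.sqrt ∘ hS.inv.isHermitian.eigenvalues) * (star hS.inv.isHermitian.eigenvectorUnitary : Matrix (Fin m) (Fin m) ℝ)) with hT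
  have hTT : T * T = S⁻¹ := (sqrt_aux S⁻¹ hS.inv.isHermitian (fun i => (hS.inv.eigenvalues_pos i).le)).1
  have hTsymm : Tᵀ = T := (sqrt_aux S⁻¹ hS.inv.isHermitian (fun i => (hS.inv.eigenvalues_pos i).le)).2
  clear_value T
  set N := R * B * T with hN
  have hpsd : (N * Nᵀ).PosSemidef := by
    simpa [real_conjTranspose] using posSemidef_self_mul_conjTranspose N
  have hP : (N * Nᵀ + 1).PosDef := Matrix.PosDef.posSemidef_add hpsd Matrix.PosDef.one
  have hPdet : IsUnit (N * Nᵀ + 1).det := (Matrix.isUnit_iff_isUnit_det _).1 hP.isUnit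
  have hNNT : N * Nᵀ = R * (B * S⁻¹ * Bᵀ) * R := by
    rw [hN, transpose_mul, transpose_mul, hTsymm, hRsymm, ← hTT]
    simp only [Matrix.mul_assoc]
  have hK : B * S⁻¹ * Bᵀ + D⁻¹ = R⁻¹ * (N * Nᵀ + 1) * R⁻¹ := by
    have e : R⁻¹ * (N * Nᵀ + 1) * R⁻¹ = R⁻¹ * (N * Nᵀ) * R⁻¹ + R⁻¹ * R⁻¹ := by
      rw [Matrix.mul_add, Matrix.add_mul, Matrix.mul_one]
    rw [e, hNNT]
    congr 1
    · have h3 : R⁻¹ * (R * (B * S⁻¹ * Bᵀ) * R) * R⁻¹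
          = R⁻¹ * R * (B * S⁻¹ * Bᵀ) * (R * R⁻¹) := by
        simp only [Matrix.mul_assoc]
      rw [h3, hRinv, hRinv', Matrix.one_mul, Matrix.mul_one]
    · rw [← hRR, Matrix.mul_inv_rev]
  have hKinv : (B * S⁻¹ * Bᵀ + D⁻¹)⁻¹ = R * (N * Nᵀ + 1)⁻¹ * R := by
    rw [hK, Matrix.mul_inv_rev, Matrix.mul_inv_rev,
      Matrix.nonsing_inv_nonsing_inv _ hRdet]
    simp only [Matrix.mul_assoc]
  have hmain : R⁻¹ * (B * S⁻¹ * Bᵀ + D⁻¹)⁻¹ * B * S⁻¹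
      = ((N * Nᵀ + 1)⁻¹ * N) * T := by
    rw [hKinv, ← hTT]
    have h4 : R⁻¹ * (R * (N * Nᵀ + 1)⁻¹ * R) * B * (T * T)
        = R⁻¹ * R * ((N * Nᵀ + 1)⁻¹ * N * T) := by
      simp only [hN, Matrix.mul_assoc]
    rw [h4, hRinv, Matrix.one_mul]
  rw [hmain]
  have h1 : spec (((N * Nᵀ + 1)⁻¹ * N) * T)
      ≤ spec ((N * Nᵀ + 1)⁻¹ * N) * spec T := by
    simpa [spec_eq_l2] using Matrix.l2_opNorm_mul ((N * Nᵀ + 1)⁻¹ * N) T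
  have h2 : spec ((N * Nᵀ + 1)⁻¹ * N) ≤ 1 / 2 := core N
  have hT2 : spec T * spec T = spec S⁻¹ := by
    have := Matrix.l2_opNorm_conjTranspose_mul_self T
    rw [real_conjTranspose, hTsymm, hTT] at this
    simpa [spec_eq_l2] using this.symm
  have hTnn : 0 ≤ spec T := spec_nonneg T
  have hMnn : 0 ≤ spec (((N * Nᵀ + 1)⁻¹ * N) * T) := spec_nonneg _
  calc spec (((N * Nᵀ + 1)⁻¹ * N) * T) ^ 2
      ≤ (spec ((N * Nᵀ + 1)⁻¹ * N) * spec T) ^ 2 := by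
        apply pow_le_pow_left₀ hMnn h1
    _ ≤ ((1 / 2) * spec T) ^ 2 := by
        apply pow_le_pow_left₀ (mul_nonneg (spec_nonneg _) hTnn)
          (mul_le_mul_of_nonneg_right h2 hTnn)
    _ = spec S⁻¹ / 4 := by rw [mul_pow, ← hT2]; ring
end

section
/- Let A ∈ ℝ^{N×d} and C be a symmetric positive-definite d×d matrix, and let c₀ ∈ ℝ^d. Then ‖C^{-1/2} (AᵀA + C⁻¹)⁻¹ C⁻¹ c₀‖₂² ≤ c₀ᵀ C⁻¹ c₀. -/
open Matrix

set_option maxHeartbeats 1000000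

/-- The Euclidean norm of a vector in `ℝ^d`. -/
noncomputable def vnorm {d : ℕ} (x : Fin d → ℝ) : ℝ :=
  Real.sqrt (∑ i, x i ^ 2)

/-- `Matrix.PosSemidef.sqrt` as defined in the older Mathlib (removed since). -/
noncomputable def posSemidefSqrt {n : Type*} [Fintype n] [DecidableEq n] {A : Matrix n n ℝ}
    (hA : A.PosSemidef) : Matrix n n ℝ :=
  hA.1.eigenvectorUnitary.1 * diagonal ((↑) ∘ (√·) ∘ hA.1.eigenvalues) *
    (star hA.1.eigenvectorUnitary : Matrix n n ℝ)

private lemma stmt_6_aux {N d : ℕ} (A : Matrix (Fin N) (Fin d) ℝ)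
    (C : Matrix (Fin d) (Fin d) ℝ) (hC : C.PosDef) (c₀ : Fin d → ℝ)
    (S : Matrix (Fin d) (Fin d) ℝ) (hSS : S * S = C) (hSsym : Sᵀ = S) :
    vnorm ((S⁻¹ * (Aᵀ * A + C⁻¹)⁻¹ * C⁻¹) *ᵥ c₀) ^ 2 ≤ c₀ ⬝ᵥ (C⁻¹ *ᵥ c₀) := by
  have hCdet : IsUnit C.det := hC.det_pos.ne'.isUnit
  have hSdet : IsUnit S.det := by
    have h : S.det * S.det = C.det := by rw [← Matrix.det_mul, hSS]
    exact isUnit_of_mul_isUnit_left (h ▸ hCdet)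
  have hSinv : S * S⁻¹ = 1 := Matrix.mul_nonsing_inv _ hSdet
  have hSinv' : S⁻¹ * S = 1 := Matrix.nonsing_inv_mul _ hSdet
  set M := Aᵀ * A + C⁻¹ with hMdef
  set T := S * M * S with hTdef
  have hT1 : T = (A * S)ᵀ * (A * S) + 1 := by
    rw [hTdef, hMdef, Matrix.transpose_mul, hSsym, ← hSS, Matrix.mul_inv_rev,
      Matrix.mul_add, Matrix.add_mul]
    have e1 : S * (Aᵀ * A) * S = S * Aᵀ * (A * S) := by
      simp only [Matrix.mul_assoc]
    have e2 : S * (S⁻¹ * S⁻¹) * S = 1 := by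
      simp only [Matrix.mul_assoc, hSinv']
      simpa using hSinv
    rw [e1, e2]
  have hG : ((A * S)ᵀ * (A * S)).PosSemidef := by
    have := Matrix.posSemidef_conjTranspose_mul_self (A * S)
    rwa [Matrix.conjTranspose_eq_transpose_of_trivial] at this
  have hT : T.PosDef := by
    rw [hT1]
    exact Matrix.PosDef.posSemidef_add hG Matrix.PosDef.one
  have hTdet : IsUnit T.det := hT.det_pos.ne'.isUnit
  have hTinv : T * T⁻¹ = 1 := Matrix.mul_nonsing_inv _ hTdet
  have hkey : S⁻¹ * M⁻¹ * C⁻¹ = T⁻¹ * S⁻¹ := by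
    rw [hTdef, ← hSS, Matrix.mul_inv_rev, Matrix.mul_inv_rev, Matrix.mul_inv_rev]
    simp [Matrix.mul_assoc]
  set w : Fin d → ℝ := S⁻¹ *ᵥ c₀ with hw
  set v : Fin d → ℝ := T⁻¹ *ᵥ w with hv
  have hx : (S⁻¹ * M⁻¹ * C⁻¹) *ᵥ c₀ = v := by
    rw [hkey, ← Matrix.mulVec_mulVec, hv, hw]
  rw [hx]
  have hlhs : vnorm v ^ 2 = v ⬝ᵥ v := by
    rw [vnorm, Real.sq_sqrt (Finset.sum_nonneg fun i _ => sq_nonneg _)]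
    simp [dotProduct, sq]
  rw [hlhs]
  have hrhs : c₀ ⬝ᵥ (C⁻¹ *ᵥ c₀) = w ⬝ᵥ w := by
    rw [← hSS, Matrix.mul_inv_rev, ← Matrix.mulVec_mulVec, ← hw,
      Matrix.dotProduct_mulVec, ← Matrix.mulVec_transpose,
      Matrix.transpose_nonsing_inv, hSsym, ← hw]
  rw [hrhs]
  set u : Fin d → ℝ := ((A * S)ᵀ * (A * S)) *ᵥ v with hu
  have hwv : w = v + u := by
    have h : w = T *ᵥ v := by
      rw [hv, Matrix.mulVec_mulVec, hTinv, Matrix.one_mulVec]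
    rw [h, hT1, Matrix.add_mulVec, Matrix.one_mulVec, add_comm, hu]
  have h1 : 0 ≤ u ⬝ᵥ u := Finset.sum_nonneg fun i _ => mul_self_nonneg _
  have h2 : 0 ≤ v ⬝ᵥ u := by
    have := hG.dotProduct_mulVec_nonneg v
    simpa [hu] using this
  have h3 : 0 ≤ u ⬝ᵥ v := by rwa [dotProduct_comm]
  rw [hwv]
  rw [add_dotProduct, dotProduct_add, dotProduct_add]
  linarith

theorem stmt_6 {N d : ℕ} (A : Matrix (Fin N) (Fin d) ℝ)
    (C : Matrix (Fin d) (Fin d) ℝ) (hC : C.PosDef) (c₀ : Fin d → ℝ) :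
    vnorm (((posSemidefSqrt hC.posSemidef)⁻¹ * (Aᵀ * A + C⁻¹)⁻¹ * C⁻¹) *ᵥ c₀) ^ 2
      ≤ c₀ ⬝ᵥ (C⁻¹ *ᵥ c₀) := by
  refine stmt_6_aux A C hC c₀ _ ?_ ?_
  · have hA := hC.posSemidef
    have hspec := hA.1.spectral_theorem
    rw [Unitary.conjStarAlgAut_apply] at hspec
    unfold posSemidefSqrt
    have hU : (star hA.1.eigenvectorUnitary : Matrix (Fin d) (Fin d) ℝ) *
        hA.1.eigenvectorUnitary = 1 := Unitary.coe_star_mul_self _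
    simp only [Matrix.mul_assoc]
    rw [← Matrix.mul_assoc _ (hA.1.eigenvectorUnitary : Matrix (Fin d) (Fin d) ℝ), hU,
      Matrix.one_mul, ← Matrix.mul_assoc (diagonal _), diagonal_mul_diagonal]
    conv_rhs => rw [hspec]
    rw [Matrix.mul_assoc]
    congr 3
    funext i
    simp [Real.mul_self_sqrt (hA.eigenvalues_nonneg i)]
  · unfold posSemidefSqrt
    simp [Matrix.star_eq_conjTranspose, Matrix.conjTranspose_eq_transpose_of_trivial,
      Matrix.transpose_mul, Matrix.mul_assoc]
end
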